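/- Let P be a finite poset with linear extension p_1,...,p_m and B_i ⊆ [n] nonempty subsets such that 𝔄 = Hom(P, B_1,...,B_m). Then for every k ≥ 1, L(𝔄)^k = L(𝔄; k); that is, every product U_{g_1}⋯U_{g_k} with g_1,...,g_k ∈ 𝔄 equals U_{f_1}⋯U_{f_k} for some chain f_1 ≤ f_2 ≤ ⋯ ≤ f_k in 𝔄. -/

import Mathlib

open MvPolynomial Pointwise

/-- Order statistics are monotone: if `a ≤ b` pointwise, then the sorted
version of `a` is pointwise below the sorted version of `b`. -/
lemma sorted_le_sorted {k n : ℕ} (a b : Fin k → Fin n) (hab : ∀ ℓ, a ℓ ≤ b ℓ)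
    (j : Fin k) : (a ∘ Tuple.sort a) j ≤ (b ∘ Tuple.sort b) j := by
  classical
  set c : Fin n := (b ∘ Tuple.sort b) j with hc
  have hmb : Monotone (b ∘ Tuple.sort b) := Tuple.monotone_sort b
  have hma : Monotone (a ∘ Tuple.sort a) := Tuple.monotone_sort a
  have hbj : (b ∘ Tuple.sort b) j ≤ c := le_rfl
  have h1 : (j : ℕ) < Fintype.card {i // (b ∘ Tuple.sort b) i ≤ c} :=
    by rw [Fintype.card_subtype]; exact (Tuple.lt_card_le_iff_apply_le_of_monotone (a := c) (j := j) hmb).2 hbj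
  -- card of sorted sublevel set equals card of original sublevel set
  have cardEq : ∀ (f : Fin k → Fin n),
      Fintype.card {i // (f ∘ Tuple.sort f) i ≤ c} = Fintype.card {i // f i ≤ c} := by
    intro f
    exact Fintype.card_congr ((Tuple.sort f).subtypeEquiv (fun i => Iff.rfl))
  have h2 : Fintype.card {i // b i ≤ c} ≤ Fintype.card {i // a i ≤ c} := by
    apply Fintype.card_le_of_injective
      (fun x => ⟨x.1, le_trans (hab x.1) x.2⟩)
    intro x y hxy
    simp only [Subtype.mk.injEq] at hxy
    exact Subtype.ext hxy
  have h3 : (j : ℕ) < Fintype.card {i // (a ∘ Tuple.sort a) i ≤ c} := by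
    rw [cardEq a]
    calc (j : ℕ) < Fintype.card {i // (b ∘ Tuple.sort b) i ≤ c} := h1
    _ = Fintype.card {i // b i ≤ c} := cardEq b
    _ ≤ Fintype.card {i // a i ≤ c} := h2
  rw [Fintype.card_subtype] at h3
  exact (Tuple.lt_card_le_iff_apply_le_of_monotone (a := c) (j := j) hma).1 h3

lemma span_pow_eq_span_pow {R : Type*} [CommRing R] (s : Set R) (k : ℕ) :
    Ideal.span s ^ k = Ideal.span (s ^ k) := by
  induction k with
  | zero => simp [Ideal.one_eq_top]
  | succ l ih => rw [pow_succ, pow_succ, ih, Ideal.span_mul_span']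

/-- if `𝔄 = Hom(P, B₁,…,Bₘ)`, then for every `k ≥ 1` one has
`L(𝔄)^k = L(𝔄; k)`; moreover every product `U_{g₁}⋯U_{g_k}` with `gⱼ ∈ 𝔄`
equals `U_{f₁}⋯U_{f_k}` for some weakly increasing chain `f₁ ≤ ⋯ ≤ f_k` in `𝔄`. -/
theorem stmt13 (K : Type) [Field K] (m n : ℕ) (r : Fin m → Fin m → Prop)
    (hrefl : ∀ i, r i i) (htrans : ∀ i j k, r i j → r j k → r i k)
    (hcompat : ∀ i j, r i j → i ≤ j)
    (B : Fin m → Finset (Fin n)) (hB : ∀ i, (B i).Nonempty)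
    (𝔄 : Set (Fin m → Fin n))
    (h𝔄 : 𝔄 = {f : Fin m → Fin n |
      (∀ i, f i ∈ B i) ∧ ∀ i j, r i j → f i ≤ f j})
    (k : ℕ) (hk : 1 ≤ k) :
    ((Ideal.span ((fun f : Fin m → Fin n =>
        ∏ i : Fin m, (X (i, f i) : MvPolynomial (Fin m × Fin n) K)) '' 𝔄)) ^ k =
      Ideal.span {p : MvPolynomial (Fin m × Fin n) K |
        ∃ F : Fin k → (Fin m → Fin n),
          (∀ j, F j ∈ 𝔄) ∧
          (∀ j j' : Fin k, j ≤ j' → ∀ i, F j i ≤ F j' i) ∧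
          p = ∏ j : Fin k, ∏ i : Fin m, X (i, F j i)}) ∧
    ∀ G : Fin k → (Fin m → Fin n), (∀ j, G j ∈ 𝔄) →
      ∃ F : Fin k → (Fin m → Fin n),
        (∀ j, F j ∈ 𝔄) ∧
        (∀ j j' : Fin k, j ≤ j' → ∀ i, F j i ≤ F j' i) ∧
        (∏ j : Fin k, ∏ i : Fin m, (X (i, G j i) : MvPolynomial (Fin m × Fin n) K)) =
          ∏ j : Fin k, ∏ i : Fin m, X (i, F j i) := by
  classical
  -- the key combinatorial statement (second part)
  have key : ∀ G : Fin k → (Fin m → Fin n), (∀ j, G j ∈ 𝔄) →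
      ∃ F : Fin k → (Fin m → Fin n),
        (∀ j, F j ∈ 𝔄) ∧
        (∀ j j' : Fin k, j ≤ j' → ∀ i, F j i ≤ F j' i) ∧
        (∏ j : Fin k, ∏ i : Fin m, (X (i, G j i) : MvPolynomial (Fin m × Fin n) K)) =
          ∏ j : Fin k, ∏ i : Fin m, X (i, F j i) := by
    intro G hG
    set F : Fin k → Fin m → Fin n :=
      fun j i => ((fun ℓ => G ℓ i) ∘ Tuple.sort (fun ℓ => G ℓ i)) j with hF
    refine ⟨F, ?_, ?_, ?_⟩
    · intro j
      rw [h𝔄]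
      refine ⟨fun i => ?_, fun i i' hr => ?_⟩
      · have := (h𝔄 ▸ hG (Tuple.sort (fun ℓ => G ℓ i) j)).1 i
        exact this
      · exact sorted_le_sorted (fun ℓ => G ℓ i) (fun ℓ => G ℓ i')
          (fun ℓ => (h𝔄 ▸ hG ℓ).2 i i' hr) j
    · intro j j' hjj' i
      exact Tuple.monotone_sort (fun ℓ => G ℓ i) hjj'
    · rw [Finset.prod_comm, Finset.prod_comm (s := Finset.univ (α := Fin k))]
      refine Finset.prod_congr rfl (fun i _ => ?_)
      exact (Equiv.prod_comp (Tuple.sort (fun ℓ => G ℓ i))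
        (fun ℓ => (X (i, G ℓ i) : MvPolynomial (Fin m × Fin n) K))).symm
  refine ⟨?_, key⟩
  set S : Set (MvPolynomial (Fin m × Fin n) K) :=
    ((fun f : Fin m → Fin n =>
        ∏ i : Fin m, (X (i, f i) : MvPolynomial (Fin m × Fin n) K)) '' 𝔄) with hS
  set T : Set (MvPolynomial (Fin m × Fin n) K) :=
    {p : MvPolynomial (Fin m × Fin n) K |
        ∃ F : Fin k → (Fin m → Fin n),
          (∀ j, F j ∈ 𝔄) ∧
          (∀ j j' : Fin k, j ≤ j' → ∀ i, F j i ≤ F j' i) ∧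
          p = ∏ j : Fin k, ∏ i : Fin m, X (i, F j i)} with hT
  rw [span_pow_eq_span_pow]
  apply le_antisymm
  · rw [Ideal.span_le]
    intro x hx
    rw [Set.mem_pow] at hx
    obtain ⟨f, hf⟩ := hx
    have hchoice : ∀ j : Fin k, ∃ g : Fin m → Fin n, g ∈ 𝔄 ∧
        (∏ i : Fin m, (X (i, g i) : MvPolynomial (Fin m × Fin n) K)) = (f j : _) := by
      intro j
      obtain ⟨g, hg, hgeq⟩ := (f j).2
      exact ⟨g, hg, hgeq⟩
    choose G hGmem hGeq using hchoice
    obtain ⟨F, hF1, hF2, hF3⟩ := key G hGmem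
    have hx' : x = ∏ j : Fin k, ∏ i : Fin m,
        (X (i, G j i) : MvPolynomial (Fin m × Fin n) K) := by
      rw [← hf, List.prod_ofFn]
      exact Finset.prod_congr rfl (fun j _ => (hGeq j).symm)
    apply Ideal.subset_span
    exact ⟨F, hF1, hF2, by rw [hx', hF3]⟩
  · rw [Ideal.span_le]
    rintro x ⟨F, hF1, _, rfl⟩
    apply Ideal.subset_span
    rw [Set.mem_pow]
    refine ⟨fun j => ⟨∏ i : Fin m, (X (i, F j i) : MvPolynomial (Fin m × Fin n) K),
      ⟨F j, hF1 j, rfl⟩⟩, ?_⟩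
    rw [List.prod_ofFn]
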